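/- arXiv:1011.2235 — 3 statements merged into one kernel-verified Lean document; each statement's English description precedes it below -/
import Mathlib

section
/- Let k ≥ 1 and let L_1, …, L_k be positive integers. Suppose given a hierarchical family of real-valued arrays x^{(1)}, …, x^{(k)}, where x^{(j)} assigns a real number to every j-tuple (l_1,…,l_j) with 1 ≤ l_i ≤ L_i, and write x := x^{(k)}, n := L_1⋯L_k, ‖x‖ for the ℓ²-norm of the full bottom-level array, x_av := (1/n)·∑ x(l_1,…,l_k), and m^{(j+1)}(s) := (1/L_{j+1})·∑_{c=1}^{L_{j+1}} x^{(j+1)}(s,c) for a j-tuple s. If ε ≥ 0 and for every level j ∈ {1,…,k−1} and every j-tuple s one has |x^{(j)}(s) − m^{(j+1)}(s)| ≤ ε·‖x‖, then the top-level mean m̄ := (1/L_1)·∑_{l_1=1}^{L_1} x^{(1)}(l_1) satisfies |m̄ − x_av| ≤ (k−1)·ε·‖x‖. -/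
private lemma sum_snoc_aux (L : ℕ → ℕ) (j : ℕ) (f : ((i : Fin (j+1)) → Fin (L i)) → ℝ) :
    (∑ t : (i : Fin (j+1)) → Fin (L i), f t)
      = ∑ s : (i : Fin j) → Fin (L i), ∑ c : Fin (L j), f (Fin.snoc s c) := by
  rw [← (Fin.snocEquiv (fun i : Fin (j+1) => Fin (L i))).sum_comp f]
  rw [Fintype.sum_prod_type_right]
  rfl

/-- **Error-propagation bound for multiscale gossip (term T₂).**
Hierarchical family with `k` levels and branching factors `L 0, …, L (k-1)`
(0-indexed: `L (i-1)` is the paper's `L_i`).  The level-`j` array `x j` is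
defined on `j`-tuples `(i : Fin j) → Fin (L i)`.  If at every level
`j ∈ {1,…,k-1}` each value differs from the mean of its children by at most
`ε * ‖x‖`, then the top-level mean is within `(k-1) * ε * ‖x‖` of the global
average `x_av`. -/
theorem multiscale_gossip_top_mean_error
    (k : ℕ) (hk : 1 ≤ k) (L : ℕ → ℕ) (hL : ∀ i, i < k → 0 < L i)
    (x : (j : ℕ) → ((i : Fin j) → Fin (L i)) → ℝ)
    (ε : ℝ) (hε : 0 ≤ ε)
    (normx : ℝ)
    (hnorm : normx = Real.sqrt (∑ t : (i : Fin k) → Fin (L i), (x k t) ^ 2))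
    (xav : ℝ)
    (hxav : xav = (∑ t : (i : Fin k) → Fin (L i), x k t) / (∏ i ∈ Finset.range k, (L i : ℝ)))
    (hacc : ∀ j, 1 ≤ j → j < k → ∀ s : (i : Fin j) → Fin (L i),
      |x j s - (∑ c : Fin (L j), x (j + 1) (Fin.snoc s c)) / (L j : ℝ)| ≤ ε * normx) :
    |(∑ c : Fin (L 0), x 1 (Fin.snoc (fun i : Fin 0 => i.elim0) c)) / (L 0 : ℝ) - xav|
      ≤ ((k : ℝ) - 1) * ε * normx := by
  set P : ℕ → ℝ := fun j => ∏ i ∈ Finset.range j, (L i : ℝ) with hPdef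
  set A : ℕ → ℝ := fun j => (∑ s : (i : Fin j) → Fin (L i), x j s) / P j with hAdef
  have hPpos : ∀ j, j ≤ k → 0 < P j := by
    intro j hj
    refine Finset.prod_pos ?_
    intro i hi
    exact_mod_cast hL i (lt_of_lt_of_le (Finset.mem_range.mp hi) hj)
  have hcard : ∀ j, (Fintype.card ((i : Fin j) → Fin (L i)) : ℝ) = P j := by
    intro j
    rw [Fintype.card_pi]
    push_cast
    simp [Fin.prod_univ_eq_prod_range (fun i => (L i : ℝ))]
    rfl
  -- one-step bound
  have step : ∀ j, 1 ≤ j → j < k → |A j - A (j + 1)| ≤ ε * normx := by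
    intro j hj1 hjk
    have hLj : (0 : ℝ) < (L j : ℝ) := by exact_mod_cast hL j hjk
    have hPj : 0 < P j := hPpos j (le_of_lt hjk)
    have hkey : A j - A (j + 1)
        = (∑ s : (i : Fin j) → Fin (L i),
            (x j s - (∑ c : Fin (L j), x (j + 1) (Fin.snoc s c)) / (L j : ℝ))) / P j := by
      have hP1 : P (j + 1) = P j * (L j : ℝ) := by
        simp [hPdef, Finset.prod_range_succ]
      have hs := sum_snoc_aux L j (x (j + 1))
      rw [hAdef]
      simp only
      rw [hs, hP1, Finset.sum_sub_distrib, ← Finset.sum_div, sub_div]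
      congr 1
      rw [div_div]
      ring_nf
    rw [hkey]
    rw [abs_div, abs_of_pos hPj, div_le_iff₀ hPj]
    calc |∑ s : (i : Fin j) → Fin (L i),
            (x j s - (∑ c : Fin (L j), x (j + 1) (Fin.snoc s c)) / (L j : ℝ))|
        ≤ ∑ s : (i : Fin j) → Fin (L i),
            |x j s - (∑ c : Fin (L j), x (j + 1) (Fin.snoc s c)) / (L j : ℝ)| :=
          Finset.abs_sum_le_sum_abs _ _
      _ ≤ ∑ _s : (i : Fin j) → Fin (L i), ε * normx :=
          Finset.sum_le_sum fun s _ => hacc j hj1 hjk s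
      _ = (Fintype.card ((i : Fin j) → Fin (L i)) : ℝ) * (ε * normx) := by
          rw [Finset.sum_const, Finset.card_univ, nsmul_eq_mul]
      _ = ε * normx * P j := by rw [hcard]; ring
  -- telescoping
  have tele : ∀ m, 1 ≤ m → m ≤ k → |A 1 - A m| ≤ ((m : ℝ) - 1) * (ε * normx) := by
    intro m
    induction m with
    | zero => intro h; omega
    | succ n ih =>
      intro _ hmk
      rcases Nat.eq_or_lt_of_le (Nat.one_le_iff_ne_zero.mpr (Nat.succ_ne_zero n)) with h1 | h1
      · obtain rfl : n = 0 := by omega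
        simp
      · have hn1 : 1 ≤ n := Nat.lt_succ_iff.mp h1
        have hnk : n < k := Nat.lt_of_lt_of_le (Nat.lt_succ_self n) hmk
        have := ih hn1 (le_of_lt hnk)
        calc |A 1 - A (n + 1)| ≤ |A 1 - A n| + |A n - A (n + 1)| := by
              have := abs_sub_le (A 1) (A n) (A (n + 1)); linarith [abs_sub_le (A 1) (A n) (A (n+1))]
          _ ≤ ((n : ℝ) - 1) * (ε * normx) + ε * normx := by
              have hs := step n hn1 hnk; linarith
          _ = (((n + 1 : ℕ) : ℝ) - 1) * (ε * normx) := by push_cast; ring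
  have htop : (∑ c : Fin (L 0), x 1 (Fin.snoc (fun i : Fin 0 => i.elim0) c)) / (L 0 : ℝ)
      = A 1 := by
    have h0 := sum_snoc_aux L 0 (x 1)
    have hd : (fun i : Fin 0 => i.elim0) = (default : (i : Fin 0) → Fin (L i)) :=
      Subsingleton.elim _ _
    have hu : (∑ s : (i : Fin 0) → Fin (L i), ∑ c : Fin (L 0), x 1 (Fin.snoc s c))
        = ∑ c : Fin (L 0), x 1 (Fin.snoc (fun i : Fin 0 => i.elim0) c) := by
      rw [Fintype.sum_unique
        (fun s : (i : Fin 0) → Fin (L i) => ∑ c : Fin (L 0), x 1 (Fin.snoc s c)), ← hd]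
    rw [hAdef]
    simp only [hPdef]
    rw [h0, hu, Finset.prod_range_one]
  have hxavA : xav = A k := by rw [hxav, hAdef]
  rw [htop, hxavA]
  have := tele k hk le_rfl
  calc |A 1 - A k| ≤ ((k : ℝ) - 1) * (ε * normx) := this
    _ = ((k : ℝ) - 1) * ε * normx := by ring
end

section
/- Let k ≥ 1, let L_1, …, L_k be positive integers, n := L_1⋯L_k, and let ε ≥ 0. Suppose given a hierarchical family of real-valued arrays x^{(1)}, …, x^{(k)} (with x^{(j)} defined on j-tuples (l_1,…,l_j), 1 ≤ l_i ≤ L_i), write x := x^{(k)}, ‖x‖ for the ℓ²-norm of the full bottom-level array, x_av := (1/n)·∑ x(l_1,…,l_k), m^{(j+1)}(s) := (1/L_{j+1})·∑_{c=1}^{L_{j+1}} x^{(j+1)}(s,c), and m̄ := (1/L_1)·∑_{l_1=1}^{L_1} x^{(1)}(l_1). Assume: (i) |x^{(j)}(s) − m^{(j+1)}(s)| ≤ ε·‖x‖ for every j ∈ {1,…,k−1} and every j-tuple s; (ii) there are reals y_1,…,y_{L_1} with ∑_{s=1}^{L_1} (y_s − m̄)² ≤ ε²·‖x‖² and ∑_{s=1}^{L_1}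 y_s = ∑_{s=1}^{L_1} x^{(1)}(s). Define z on k-tuples by z(l_1,…,l_k) := y_{l_1}. Then ∑ over all k-tuples of (z(l_1,…,l_k) − x_av)² ≤ (L_2⋯L_k)·ε²·‖x‖² + n·(k−1)²·ε²·‖x‖². -/
/-- **Deterministic core of the final-error theorem for multiscale gossip.**
Hierarchical family with `k` levels and branching factors `L 0, …, L (k-1)`
(0-indexed: `L (i-1)` is the paper's `L_i`, so `L 0 = L_1`).  Assuming
(i) every level-`j` value (`1 ≤ j ≤ k-1`) is within `ε * ‖x‖` of the mean of
its children, and (ii) the post-top-level-gossip values `y` satisfy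
`∑ (y s - m̄)² ≤ ε² ‖x‖²` and preserve the sum of the top-level values,
the final vector `z (l₁,…,l_k) = y l₁` satisfies
`∑ (z t - x_av)² ≤ (L_2⋯L_k) ε² ‖x‖² + n (k-1)² ε² ‖x‖²`. -/
theorem multiscale_gossip_final_sq_error
    (k : ℕ) (hk : 1 ≤ k) (L : ℕ → ℕ) (hL : ∀ i, i < k → 0 < L i)
    (ε : ℝ) (hε : 0 ≤ ε)
    (x : (j : ℕ) → ((i : Fin j) → Fin (L i)) → ℝ)
    (normx xav mbar : ℝ)
    (hnorm : normx = Real.sqrt (∑ t : (i : Fin k) → Fin (L i), (x k t) ^ 2))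
    (hxav : xav = (∑ t : (i : Fin k) → Fin (L i), x k t) / (∏ i ∈ Finset.range k, (L i : ℝ)))
    (hmbar : mbar = (∑ c : Fin (L 0), x 1 (Fin.snoc (fun i : Fin 0 => i.elim0) c)) / (L 0 : ℝ))
    (hacc : ∀ j, 1 ≤ j → j < k → ∀ s : (i : Fin j) → Fin (L i),
      |x j s - (∑ c : Fin (L j), x (j + 1) (Fin.snoc s c)) / (L j : ℝ)| ≤ ε * normx)
    (y : Fin (L 0) → ℝ)
    (hy1 : ∑ s : Fin (L 0), (y s - mbar) ^ 2 ≤ ε ^ 2 * normx ^ 2)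
    (hy2 : ∑ s : Fin (L 0), y s
      = ∑ c : Fin (L 0), x 1 (Fin.snoc (fun i : Fin 0 => i.elim0) c)) :
    ∑ t : (i : Fin k) → Fin (L i), (y (t ⟨0, hk⟩) - xav) ^ 2
      ≤ (∏ i ∈ Finset.Ico 1 k, (L i : ℝ)) * ε ^ 2 * normx ^ 2
        + (∏ i ∈ Finset.range k, (L i : ℝ)) * ((k : ℝ) - 1) ^ 2 * ε ^ 2 * normx ^ 2 := by
  have hnormx0 : 0 ≤ normx := hnorm ▸ Real.sqrt_nonneg _
  have hsnoc : ∀ (j : ℕ) (f : ((i : Fin (j+1)) → Fin (L i)) → ℝ),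
      (∑ t, f t) = ∑ s : (i : Fin j) → Fin (L i), ∑ c : Fin (L j), f (Fin.snoc s c) := by
    intro j f
    rw [← (Fin.snocEquiv (fun i => Fin (L i))).sum_comp f, Fintype.sum_prod_type,
      Finset.sum_comm]
    rfl
  have hcard : ∀ j : ℕ, (Fintype.card ((i : Fin j) → Fin (L i)) : ℝ)
      = ∏ i ∈ Finset.range j, (L i : ℝ) := by
    intro j
    rw [Fintype.card_pi]
    simp only [Fintype.card_fin]
    push_cast
    exact Fin.prod_univ_eq_prod_range (fun i => (L i : ℝ)) j
  have hPpos : ∀ j, j ≤ k → (0:ℝ) < ∏ i ∈ Finset.range j, (L i : ℝ) := by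
    intro j hj
    apply Finset.prod_pos
    intro i hi
    exact_mod_cast hL i (lt_of_lt_of_le (Finset.mem_range.mp hi) hj)
  set A : ℕ → ℝ := fun j =>
    (∑ t : (i : Fin j) → Fin (L i), x j t) / (∏ i ∈ Finset.range j, (L i : ℝ)) with hA
  have hstep : ∀ j, 1 ≤ j → j < k → |A j - A (j+1)| ≤ ε * normx := by
    intro j hj1 hjk
    have hLj : (0:ℝ) < (L j : ℝ) := by exact_mod_cast hL j hjk
    have hPj : (0:ℝ) < ∏ i ∈ Finset.range j, (L i : ℝ) := hPpos j hjk.le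
    have key : A j - A (j+1)
        = (∑ s : (i : Fin j) → Fin (L i),
            (x j s - (∑ c : Fin (L j), x (j+1) (Fin.snoc s c)) / (L j : ℝ)))
          / (∏ i ∈ Finset.range j, (L i : ℝ)) := by
      simp only [hA]
      rw [hsnoc j (x (j+1)), Finset.prod_range_succ, Finset.sum_sub_distrib,
        ← Finset.sum_div]
      field_simp
    rw [key, abs_div, abs_of_pos hPj, div_le_iff₀ hPj]
    refine le_trans (Finset.abs_sum_le_sum_abs _ _) ?_
    have hb : ∀ s ∈ Finset.univ,
        |x j s - (∑ c : Fin (L j), x (j+1) (Fin.snoc s c)) / (L j : ℝ)| ≤ ε * normx :=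
      fun s _ => hacc j hj1 hjk s
    refine le_trans (Finset.sum_le_card_nsmul _ _ _ hb) ?_
    rw [nsmul_eq_mul, Finset.card_univ, hcard j]
    exact le_of_eq (mul_comm _ _)
  have htel : ∀ j, 1 ≤ j → j ≤ k → |A 1 - A j| ≤ ((j : ℝ) - 1) * (ε * normx) := by
    intro j hj1
    induction j, hj1 using Nat.le_induction with
    | base =>
      intro _
      simp
    | succ j hj ih =>
      intro h
      have hjk : j < k := h
      have h1 := ih hjk.le
      have h2 := hstep j hj hjk
      have h3 := abs_sub_le (A 1) (A j) (A (j+1))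
      have hj' : (1:ℝ) ≤ (j:ℝ) := by exact_mod_cast hj
      push_cast
      nlinarith [h1, h2, h3]
  have h1 : (∑ t : (i : Fin 1) → Fin (L i), x 1 t)
      = ∑ c : Fin (L 0), x 1 (Fin.snoc (fun i : Fin 0 => i.elim0) c) := by
    rw [hsnoc 0 (x 1),
      Fintype.sum_unique (fun s : ((i : Fin 0) → Fin (L (i : ℕ))) =>
        ∑ c : Fin (L 0), x 1 (Fin.snoc s c))]
    have hd : (default : (i : Fin 0) → Fin (L (i : ℕ))) = fun i : Fin 0 => i.elim0 :=
      Subsingleton.elim _ _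
    rw [hd]
  have hmbarA : mbar = A 1 := by
    simp only [hA]
    rw [hmbar, Finset.prod_range_one, h1]
  have hxavA : xav = A k := by simp only [hA, hxav]
  have hm : |mbar - xav| ≤ ((k : ℝ) - 1) * (ε * normx) := by
    rw [hmbarA, hxavA]
    exact htel k hk le_rfl
  have hL0 : (0:ℝ) < (L 0 : ℝ) := by exact_mod_cast hL 0 hk
  have hsum0 : ∑ s : Fin (L 0), (y s - mbar) = 0 := by
    rw [Finset.sum_sub_distrib, hy2, hmbar, Finset.sum_const, Finset.card_univ,
      Fintype.card_fin, nsmul_eq_mul]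
    field_simp
    ring
  have hm2 : (mbar - xav) ^ 2 ≤ (((k : ℝ) - 1) * (ε * normx)) ^ 2 := by
    rw [← sq_abs (mbar - xav)]
    exact pow_le_pow_left₀ (abs_nonneg _) hm 2
  have hybound : ∑ s : Fin (L 0), (y s - xav) ^ 2
      ≤ ε ^ 2 * normx ^ 2 + (L 0 : ℝ) * (((k : ℝ) - 1) * (ε * normx)) ^ 2 := by
    have hexp : ∑ s : Fin (L 0), (y s - xav) ^ 2
        = (∑ s : Fin (L 0), (y s - mbar) ^ 2)
          + 2 * (mbar - xav) * (∑ s : Fin (L 0), (y s - mbar))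
          + (L 0 : ℝ) * (mbar - xav) ^ 2 := by
      have : ∀ s : Fin (L 0), (y s - xav) ^ 2
          = (y s - mbar) ^ 2 + 2 * (mbar - xav) * (y s - mbar) + (mbar - xav) ^ 2 :=
        fun s => by ring
      simp_rw [this]
      rw [Finset.sum_add_distrib, Finset.sum_add_distrib, ← Finset.mul_sum,
        Finset.sum_const, Finset.card_univ, Fintype.card_fin, nsmul_eq_mul]
    rw [hexp, hsum0]
    have := mul_le_mul_of_nonneg_left hm2 hL0.le
    linarith [hy1]
  obtain ⟨k', rfl⟩ : ∃ k', k = k' + 1 := ⟨k - 1, (Nat.succ_pred_eq_of_pos hk).symm⟩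
  have hsplit : (∑ t : (i : Fin (k'+1)) → Fin (L i), (y (t ⟨0, hk⟩) - xav) ^ 2)
      = (∏ i ∈ Finset.Ico 1 (k'+1), (L i : ℝ)) * ∑ c : Fin (L 0), (y c - xav) ^ 2 := by
    rw [← (Fin.consEquiv (fun i => Fin (L i))).sum_comp
        (fun t => (y (t ⟨0, hk⟩) - xav) ^ 2), Fintype.sum_prod_type]
    simp only [Fin.consEquiv_apply, Fin.mk_zero, Fin.cons_zero]
    rw [Finset.mul_sum]
    refine Finset.sum_congr rfl fun c _ => ?_
    rw [Finset.sum_const, nsmul_eq_mul, Finset.card_univ, Fintype.card_pi]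
    congr 1
    simp only [Fintype.card_fin]
    push_cast
    simp only [Fin.val_succ]
    rw [Fin.prod_univ_eq_prod_range (fun m => (L (m+1) : ℝ)) k',
      Finset.prod_Ico_eq_prod_range]
    simp only [Nat.add_sub_cancel]
    exact Finset.prod_congr rfl fun i _ => by rw [add_comm 1 i]
  rw [hsplit]
  have hN1 : (0:ℝ) ≤ ∏ i ∈ Finset.Ico 1 (k'+1), (L i : ℝ) :=
    Finset.prod_nonneg fun i _ => Nat.cast_nonneg _
  refine le_trans (mul_le_mul_of_nonneg_left hybound hN1) (le_of_eq ?_)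
  rw [Finset.prod_range_eq_mul_Ico _ (Nat.succ_pos k')]
  ring
end

section
/- Under the hypotheses of the previous statement, assume additionally that L_j ≥ 2 for every j ∈ {1,…,k}. Then the final vector z (defined on k-tuples by z(l_1,…,l_k) := y_{l_1}) satisfies ‖z − x_av·𝟙‖ ≤ √2 · n · ε · ‖x‖, where 𝟙 is the all-ones array on k-tuples, n := L_1⋯L_k, and the norm is the ℓ²-norm over all k-tuples. In particular, if ‖x‖ ≠ 0, the final relative error ‖z − x_av·𝟙‖ / ‖x‖ is at most √2·n·ε. -/
noncomputable def Bsum (L : ℕ → ℕ) (k : ℕ) (f : ((i : Fin k) → Fin (L i)) → ℝ)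
    (j : ℕ) (hj : j ≤ k) (s : (i : Fin j) → Fin (L i)) : ℝ :=
  ∑ t : (i : Fin k) → Fin (L i), if ∀ i : Fin j, t (Fin.castLE hj i) = s i then f t else 0

theorem Bsum_base (L : ℕ → ℕ) (k : ℕ) (f : ((i : Fin k) → Fin (L i)) → ℝ)
    (s : (i : Fin k) → Fin (L i)) : Bsum L k f k le_rfl s = f s := by
  unfold Bsum
  have h1 : ∀ t : (i : Fin k) → Fin (L i),
      (∀ i : Fin k, t (Fin.castLE le_rfl i) = s i) ↔ t = s := by
    intro t
    simp [funext_iff, Fin.castLE]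
  simp only [h1]
  simp

theorem Bsum_split (L : ℕ → ℕ) (k : ℕ) (f : ((i : Fin k) → Fin (L i)) → ℝ)
    (j : ℕ) (hj : j + 1 ≤ k) (s : (i : Fin j) → Fin (L i)) :
    Bsum L k f j (le_of_lt hj) s
      = ∑ c : Fin (L j), Bsum L k f (j + 1) hj (Fin.snoc s c) := by
  unfold Bsum
  rw [Finset.sum_comm]
  refine Finset.sum_congr rfl (fun t _ => ?_)
  have hcond : ∀ c : Fin (L j),
      (∀ i : Fin (j+1), t (Fin.castLE hj i) = (Fin.snoc s c : (i : Fin (j+1)) → Fin (L i)) i)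
        ↔ ((∀ i : Fin j, t (Fin.castLE (le_of_lt hj) i) = s i) ∧ t ⟨j, hj⟩ = c) := by
    intro c
    constructor
    · intro h
      refine ⟨fun i => ?_, ?_⟩
      · have := h i.castSucc
        rw [Fin.snoc_castSucc] at this
        exact this
      · have := h (Fin.last j)
        rw [Fin.snoc_last] at this
        exact this
    · rintro ⟨h1, h2⟩ i
      refine Fin.lastCases ?_ ?_ i
      · show t (Fin.castLE hj (Fin.last j)) = (Fin.snoc s c : (i : Fin (j+1)) → Fin (L i)) (Fin.last j)
        rw [Fin.snoc_last]
        exact h2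
      · intro i
        show t (Fin.castLE hj i.castSucc) = (Fin.snoc s c : (i : Fin (j+1)) → Fin (L i)) i.castSucc
        rw [Fin.snoc_castSucc]
        exact h1 i
  simp only [hcond]
  by_cases hA : ∀ i : Fin j, t (Fin.castLE (le_of_lt hj) i) = s i
  · simp [hA]
  · simp [hA]

theorem Bsum_fiber (L : ℕ → ℕ) (k : ℕ) (f : ((i : Fin k) → Fin (L i)) → ℝ)
    (j : ℕ) (hj : j ≤ k) (s : (i : Fin j) → Fin (L i)) (a : ℝ)
    (hf : ∀ t : (i : Fin k) → Fin (L i),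
      (∀ i : Fin j, t (Fin.castLE hj i) = s i) → f t = a) :
    Bsum L k f j hj s = a * Bsum L k (fun _ => (1:ℝ)) j hj s := by
  unfold Bsum
  rw [Finset.mul_sum]
  refine Finset.sum_congr rfl fun t _ => ?_
  by_cases h : ∀ i : Fin j, t (Fin.castLE hj i) = s i
  · simp [h, hf t h]
  · simp [h]

theorem Bsum_one (L : ℕ → ℕ) (k : ℕ) :
    ∀ (d j : ℕ), j + d = k → ∀ (hj : j ≤ k) (s : (i : Fin j) → Fin (L i)),
      Bsum L k (fun _ => (1:ℝ)) j hj s = ∏ i ∈ Finset.Ico j k, (L i : ℝ) := by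
  intro d
  induction d with
  | zero =>
    intro j h hj s
    have hjk : j = k := by omega
    subst hjk
    rw [Bsum_base, Finset.Ico_self, Finset.prod_empty]
  | succ d ih =>
    intro j h hj s
    have hjk : j + 1 ≤ k := by omega
    rw [Bsum_split L k _ j hjk s, Finset.prod_eq_prod_Ico_succ_bot (by omega : j < k)]
    simp only [ih (j+1) (by omega) hjk]
    rw [Finset.sum_const, Finset.card_univ, Fintype.card_fin, nsmul_eq_mul]

theorem subtree_bound (L : ℕ → ℕ) (k : ℕ)
    (x : (j : ℕ) → ((i : Fin j) → Fin (L i)) → ℝ) (ε normx : ℝ)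
    (hεn : 0 ≤ ε * normx)
    (hLpos : ∀ i, i < k → 1 ≤ L i)
    (hacc : ∀ j, 1 ≤ j → j < k → ∀ s : (i : Fin j) → Fin (L i),
      |x j s - (∑ c : Fin (L j), x (j + 1) (Fin.snoc s c)) / (L j : ℝ)| ≤ ε * normx) :
    ∀ (d j : ℕ), j + d = k → 1 ≤ j → ∀ (hj : j ≤ k) (s : (i : Fin j) → Fin (L i)),
      |x j s - Bsum L k (x k) j hj s / ∏ i ∈ Finset.Ico j k, (L i : ℝ)|
        ≤ (d : ℝ) * (ε * normx) := by
  intro d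
  induction d with
  | zero =>
    intro j h hj1 hj s
    have hjk : j = k := by omega
    subst hjk
    rw [Bsum_base, Finset.Ico_self, Finset.prod_empty, div_one, sub_self, abs_zero]
    simp
  | succ d ih =>
    intro j h hj1 hj s
    have hjk : j + 1 ≤ k := by omega
    have hLj : (0:ℝ) < (L j : ℝ) := by exact_mod_cast hLpos j (by omega)
    have hNpos : (0:ℝ) < ∏ i ∈ Finset.Ico (j+1) k, (L i : ℝ) := by
      refine Finset.prod_pos fun i hi => ?_
      have := hLpos i (Finset.mem_Ico.mp hi).2
      exact_mod_cast this
    set N : ℝ := ∏ i ∈ Finset.Ico (j+1) k, (L i : ℝ) with hN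
    rw [Bsum_split L k _ j hjk s, Finset.prod_eq_prod_Ico_succ_bot (by omega : j < k), ← hN]
    have key : x j s
        - (∑ c : Fin (L j), Bsum L k (x k) (j+1) hjk (Fin.snoc s c)) / ((L j : ℝ) * N)
        = (x j s - (∑ c : Fin (L j), x (j+1) (Fin.snoc s c)) / (L j : ℝ))
          + (∑ c : Fin (L j),
              (x (j+1) (Fin.snoc s c) - Bsum L k (x k) (j+1) hjk (Fin.snoc s c) / N))
            / (L j : ℝ) := by
      rw [Finset.sum_sub_distrib, ← Finset.sum_div]
      field_simp
      ring
    rw [key]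
    have h1 := hacc j hj1 (by omega) s
    have h2 : |(∑ c : Fin (L j),
        (x (j+1) (Fin.snoc s c) - Bsum L k (x k) (j+1) hjk (Fin.snoc s c) / N))
          / (L j : ℝ)| ≤ (d : ℝ) * (ε * normx) := by
      rw [abs_div, abs_of_pos hLj, div_le_iff₀ hLj]
      calc |∑ c : Fin (L j),
          (x (j+1) (Fin.snoc s c) - Bsum L k (x k) (j+1) hjk (Fin.snoc s c) / N)|
          ≤ ∑ c : Fin (L j),
            |x (j+1) (Fin.snoc s c) - Bsum L k (x k) (j+1) hjk (Fin.snoc s c) / N| :=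
            Finset.abs_sum_le_sum_abs _ _
        _ ≤ ∑ _c : Fin (L j), (d : ℝ) * (ε * normx) :=
            Finset.sum_le_sum fun c _ => ih (j+1) (by omega) (by omega) hjk (Fin.snoc s c)
        _ = (L j : ℝ) * ((d : ℝ) * (ε * normx)) := by
            rw [Finset.sum_const, Finset.card_univ, Fintype.card_fin, nsmul_eq_mul]
        _ = (d : ℝ) * (ε * normx) * (L j : ℝ) := by ring
    calc |_ + _| ≤ _ + _ := abs_add_le _ _
      _ ≤ ε * normx + (d : ℝ) * (ε * normx) := add_le_add h1 h2
      _ = ((d + 1 : ℕ) : ℝ) * (ε * normx) := by push_cast; ring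

theorem nat_sq_lt_pow (m : ℕ) : 1 + m^2 ≤ 2^(m+1) := by
  induction m with
  | zero => norm_num
  | succ m ih =>
    have h2 : m + 1 ≤ 2^m := Nat.lt_two_pow_self (n := m)
    have : 2^(m+1) = 2 * 2^m := by ring
    have : 2^(m+2) = 2 * 2^(m+1) := by ring
    nlinarith [ih, h2]

set_option maxHeartbeats 1000000 in
/-- **Final error of multiscale gossip (deterministic conclusion of Theorem 2).**
Under the hypotheses of the previous statement, and assuming additionally
`L_j ≥ 2` for every level, the final vector `z (l₁,…,l_k) = y l₁` satisfies
`‖z - x_av 𝟙‖ ≤ √2 · n · ε · ‖x‖`; in particular, when `‖x‖ ≠ 0`, the final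
relative error is at most `√2 · n · ε`. -/
theorem multiscale_gossip_final_error
    (k : ℕ) (hk : 1 ≤ k) (L : ℕ → ℕ) (hL : ∀ i, i < k → 2 ≤ L i)
    (ε : ℝ) (hε : 0 ≤ ε)
    (x : (j : ℕ) → ((i : Fin j) → Fin (L i)) → ℝ)
    (normx xav mbar : ℝ)
    (hnorm : normx = Real.sqrt (∑ t : (i : Fin k) → Fin (L i), (x k t) ^ 2))
    (hxav : xav = (∑ t : (i : Fin k) → Fin (L i), x k t) / (∏ i ∈ Finset.range k, (L i : ℝ)))
    (hmbar : mbar = (∑ c : Fin (L 0), x 1 (Fin.snoc (fun i : Fin 0 => i.elim0) c)) / (L 0 : ℝ))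
    (hacc : ∀ j, 1 ≤ j → j < k → ∀ s : (i : Fin j) → Fin (L i),
      |x j s - (∑ c : Fin (L j), x (j + 1) (Fin.snoc s c)) / (L j : ℝ)| ≤ ε * normx)
    (y : Fin (L 0) → ℝ)
    (hy1 : ∑ s : Fin (L 0), (y s - mbar) ^ 2 ≤ ε ^ 2 * normx ^ 2)
    (hy2 : ∑ s : Fin (L 0), y s
      = ∑ c : Fin (L 0), x 1 (Fin.snoc (fun i : Fin 0 => i.elim0) c)) :
    Real.sqrt (∑ t : (i : Fin k) → Fin (L i), (y (t ⟨0, hk⟩) - xav) ^ 2)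
      ≤ Real.sqrt 2 * (∏ i ∈ Finset.range k, (L i : ℝ)) * ε * normx
    ∧ (normx ≠ 0 →
        Real.sqrt (∑ t : (i : Fin k) → Fin (L i), (y (t ⟨0, hk⟩) - xav) ^ 2) / normx
          ≤ Real.sqrt 2 * (∏ i ∈ Finset.range k, (L i : ℝ)) * ε) := by
  have hnormx0 : 0 ≤ normx := hnorm ▸ Real.sqrt_nonneg _
  have hεn : 0 ≤ ε * normx := mul_nonneg hε hnormx0
  have hL1 : ∀ i, i < k → 1 ≤ L i := fun i hi => le_trans one_le_two (hL i hi)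
  have hL0 : (0:ℝ) < (L 0 : ℝ) := by exact_mod_cast hL1 0 (by omega)
  set e0 : (i : Fin 0) → Fin (L i) := fun i : Fin 0 => i.elim0 with he0
  set P : ℝ := ∏ i ∈ Finset.range k, (L i : ℝ) with hPdef
  set N1 : ℝ := ∏ i ∈ Finset.Ico 1 k, (L i : ℝ) with hN1def
  have hN1pos : 0 < N1 := by
    refine Finset.prod_pos fun i hi => ?_
    have := hL1 i (Finset.mem_Ico.mp hi).2
    exact_mod_cast this
  have hP : P = (L 0 : ℝ) * N1 := by
    rw [hPdef, Finset.range_eq_Ico, Finset.prod_eq_prod_Ico_succ_bot (by omega : 0 < k)]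
  have hPpos : 0 < P := hP ▸ mul_pos hL0 hN1pos
  -- subtree bound at level 1
  have hsub : ∀ c : Fin (L 0),
      |x 1 (Fin.snoc e0 c) - Bsum L k (x k) 1 hk (Fin.snoc e0 c) / N1|
        ≤ ((k - 1 : ℕ) : ℝ) * (ε * normx) :=
    fun c => subtree_bound L k x ε normx hεn hL1 hacc (k - 1) 1 (by omega) le_rfl hk
      (Fin.snoc e0 c)
  -- total sums as Bsum at level 0
  have hB0 : ∀ f : ((i : Fin k) → Fin (L i)) → ℝ,
      Bsum L k f 0 (Nat.zero_le k) e0 = ∑ t : (i : Fin k) → Fin (L i), f t := by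
    intro f
    unfold Bsum
    simp
  have hsplit0 : ∀ f : ((i : Fin k) → Fin (L i)) → ℝ,
      Bsum L k f 0 (Nat.zero_le k) e0 = ∑ c : Fin (L 0), Bsum L k f 1 hk (Fin.snoc e0 c) :=
    fun f => Bsum_split L k f 0 hk e0
  -- mbar vs xav
  have hxav' : xav = (∑ c : Fin (L 0), Bsum L k (x k) 1 hk (Fin.snoc e0 c) / N1) / (L 0 : ℝ) := by
    rw [hxav, ← hB0, hsplit0, hP, ← Finset.sum_div, div_div, mul_comm N1 ((L 0 : ℝ))]
  have hmx : |mbar - xav| ≤ ((k - 1 : ℕ) : ℝ) * (ε * normx) := by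
    have : mbar - xav = (∑ c : Fin (L 0),
        (x 1 (Fin.snoc e0 c) - Bsum L k (x k) 1 hk (Fin.snoc e0 c) / N1)) / (L 0 : ℝ) := by
      rw [hmbar, hxav', Finset.sum_sub_distrib, sub_div]
    rw [this, abs_div, abs_of_pos hL0, div_le_iff₀ hL0]
    calc |∑ c : Fin (L 0),
        (x 1 (Fin.snoc e0 c) - Bsum L k (x k) 1 hk (Fin.snoc e0 c) / N1)|
        ≤ ∑ c : Fin (L 0),
          |x 1 (Fin.snoc e0 c) - Bsum L k (x k) 1 hk (Fin.snoc e0 c) / N1| :=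
          Finset.abs_sum_le_sum_abs _ _
      _ ≤ ∑ _c : Fin (L 0), ((k - 1 : ℕ) : ℝ) * (ε * normx) :=
          Finset.sum_le_sum fun c _ => hsub c
      _ = (L 0 : ℝ) * (((k - 1 : ℕ) : ℝ) * (ε * normx)) := by
          rw [Finset.sum_const, Finset.card_univ, Fintype.card_fin, nsmul_eq_mul]
      _ = ((k - 1 : ℕ) : ℝ) * (ε * normx) * (L 0 : ℝ) := by ring
  -- rewrite the LHS sum
  have hfib : ∀ c : Fin (L 0),
      Bsum L k (fun t => (y (t ⟨0, hk⟩) - xav) ^ 2) 1 hk (Fin.snoc e0 c)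
        = (y c - xav) ^ 2 * N1 := by
    intro c
    rw [Bsum_fiber L k _ 1 hk (Fin.snoc e0 c) ((y c - xav) ^ 2) ?_,
      Bsum_one L k (k - 1) 1 (by omega) hk]
    intro t ht
    have h0 := ht 0
    have hl : (Fin.snoc e0 c : (i : Fin 1) → Fin (L i)) 0 = c := by
      simp [Fin.snoc]
    rw [hl] at h0
    have : t ⟨0, hk⟩ = c := h0
    rw [this]
  have hS : (∑ t : (i : Fin k) → Fin (L i), (y (t ⟨0, hk⟩) - xav) ^ 2)
      = N1 * ∑ c : Fin (L 0), (y c - xav) ^ 2 := by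
    rw [← hB0, hsplit0, Finset.mul_sum]
    exact Finset.sum_congr rfl fun c _ => by rw [hfib c]; ring
  -- pointwise quadratic bound
  have hpt : ∀ c : Fin (L 0),
      (y c - xav) ^ 2 ≤ 2 * (y c - mbar) ^ 2 + 2 * (mbar - xav) ^ 2 := by
    intro c
    nlinarith [sq_nonneg ((y c - mbar) - (mbar - xav))]
  have hmx2 : (mbar - xav) ^ 2 ≤ (((k - 1 : ℕ) : ℝ) * (ε * normx)) ^ 2 := by
    have h := abs_le.mp hmx
    nlinarith [h.1, h.2]
  have hsum2 : ∑ c : Fin (L 0), (y c - xav) ^ 2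
      ≤ 2 * (ε ^ 2 * normx ^ 2) + (L 0 : ℝ) * (2 * (((k - 1 : ℕ) : ℝ) * (ε * normx)) ^ 2) := by
    calc ∑ c : Fin (L 0), (y c - xav) ^ 2
        ≤ ∑ c : Fin (L 0), (2 * (y c - mbar) ^ 2 + 2 * (mbar - xav) ^ 2) :=
          Finset.sum_le_sum fun c _ => hpt c
      _ = 2 * (∑ c : Fin (L 0), (y c - mbar) ^ 2) + (L 0 : ℝ) * (2 * (mbar - xav) ^ 2) := by
          rw [Finset.sum_add_distrib, ← Finset.mul_sum, Finset.sum_const, Finset.card_univ,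
            Fintype.card_fin, nsmul_eq_mul]
      _ ≤ 2 * (ε ^ 2 * normx ^ 2) + (L 0 : ℝ) * (2 * (((k - 1 : ℕ) : ℝ) * (ε * normx)) ^ 2) := by
          have := hy1
          nlinarith [hL0, hmx2, hy1]
  -- counting bound : N1 + P * (k-1)^2 ≤ P^2
  have hcount : N1 + P * ((k - 1 : ℕ) : ℝ) ^ 2 ≤ P ^ 2 := by
    have hkP : 1 + ((k - 1 : ℕ) : ℝ) ^ 2 ≤ P := by
      have h1 : 1 + (k - 1) ^ 2 ≤ 2 ^ k := by
        have := nat_sq_lt_pow (k - 1)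
        have hk1 : k - 1 + 1 = k := by omega
        rwa [hk1] at this
      have h2 : (2 : ℕ) ^ k ≤ ∏ i ∈ Finset.range k, L i := by
        calc (2 : ℕ) ^ k = ∏ _i ∈ Finset.range k, 2 := by
              rw [Finset.prod_const, Finset.card_range]
          _ ≤ ∏ i ∈ Finset.range k, L i :=
              Finset.prod_le_prod' fun i hi => hL i (Finset.mem_range.mp hi)
      have h3 : ((1 + (k - 1) ^ 2 : ℕ) : ℝ) ≤ P := by
        rw [hPdef, ← Nat.cast_prod]
        exact_mod_cast le_trans h1 h2
      push_cast at h3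
      linarith
    have hN1P : N1 ≤ P := by
      rw [hP]
      have h1L : (1:ℝ) ≤ (L 0 : ℝ) := by exact_mod_cast hL1 0 (by omega : 0 < k)
      nlinarith [hN1pos]
    calc N1 + P * ((k - 1 : ℕ) : ℝ) ^ 2 ≤ P + P * ((k - 1 : ℕ) : ℝ) ^ 2 := by linarith
      _ = P * (1 + ((k - 1 : ℕ) : ℝ) ^ 2) := by ring
      _ ≤ P * P := mul_le_mul_of_nonneg_left hkP hPpos.le
      _ = P ^ 2 := (sq P).symm
  -- final assembly
  have hSfinal : (∑ t : (i : Fin k) → Fin (L i), (y (t ⟨0, hk⟩) - xav) ^ 2)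
      ≤ (Real.sqrt 2 * P * ε * normx) ^ 2 := by
    have hsq : (Real.sqrt 2 * P * ε * normx) ^ 2 = 2 * P ^ 2 * ε ^ 2 * normx ^ 2 := by
      rw [mul_pow, mul_pow, mul_pow, Real.sq_sqrt (by norm_num : (0:ℝ) ≤ 2)]
    rw [hS, hsq]
    calc N1 * ∑ c : Fin (L 0), (y c - xav) ^ 2
        ≤ N1 * (2 * (ε ^ 2 * normx ^ 2)
            + (L 0 : ℝ) * (2 * (((k - 1 : ℕ) : ℝ) * (ε * normx)) ^ 2)) :=
          mul_le_mul_of_nonneg_left hsum2 hN1pos.le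
      _ = 2 * (ε * normx) ^ 2 * (N1 + P * ((k - 1 : ℕ) : ℝ) ^ 2) := by rw [hP]; ring
      _ ≤ 2 * (ε * normx) ^ 2 * P ^ 2 := by
          refine mul_le_mul_of_nonneg_left hcount ?_
          positivity
      _ = 2 * P ^ 2 * ε ^ 2 * normx ^ 2 := by ring
  have hRHS0 : 0 ≤ Real.sqrt 2 * P * ε * normx :=
    mul_nonneg (mul_nonneg (mul_nonneg (Real.sqrt_nonneg 2) hPpos.le) hε) hnormx0
  have hmain : Real.sqrt (∑ t : (i : Fin k) → Fin (L i), (y (t ⟨0, hk⟩) - xav) ^ 2)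
      ≤ Real.sqrt 2 * P * ε * normx := by
    have := Real.sqrt_le_sqrt hSfinal
    rwa [Real.sqrt_sq hRHS0] at this
  refine ⟨hmain, fun h => ?_⟩
  have hn : 0 < normx := lt_of_le_of_ne hnormx0 (Ne.symm h)
  rw [div_le_iff₀ hn]
  exact hmain
end
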